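/- Suppose a fixed 0<ε<1/4 is given, n^{1/2−o(1)} < k < sqrt((1/4−ε)·n·log n), Λ(Δ) < o(1) a.s. holds, and φ > φ*. Let ρ = φ*/φ, ξ = log(1/q)/(2·log n) and r₀ = ξ·φ. Suppose C is a nontrivial clique of H = H_k(n,p) with |C| ≥ Δ ≥ φ/2 and maximum clique-degree Δ_C ≤ |C| − r₀, let x be a vertex of maximum clique-degree in C, and let G be the random subhypergraph of H obtained by retaining each edge independently with probability ρ. Then with probability at least 1/2 − o(1), D := C ∩ G satisfies: (a) |D| ≥ max{d_G(x), γ}; (b) |D ∖ D_x| > 2/ε; (c) either the maximum clique-degree of D is less than τ, or d_D(x) > λ. -/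

import Mathlib

open Filter

noncomputable section

/-- The collection of all `k`-element subsets of `Fin n`. -/
def kSets (n k : ℕ) : Finset (Finset (Fin n)) := Finset.powersetCard k Finset.univ

open Classical in
/-- The probability that the random hypergraph `H_k(n,p)` (each `k`-subset of `[n]`
present independently with probability `p`) satisfies the property `P`. -/
def hprob (n k : ℕ) (p : ℝ) (P : Finset (Finset (Fin n)) → Prop) : ℝ :=
  ∑ H ∈ (kSets n k).powerset,
    if P H then p ^ H.card * (1 - p) ^ ((kSets n k).card - H.card) else 0

/-- A family of sets is intersecting (a clique) if no two of its members are disjoint. -/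
def IsClique {n : ℕ} (C : Finset (Finset (Fin n))) : Prop :=
  ∀ A ∈ C, ∀ B ∈ C, (A ∩ B).Nonempty

/-- The star of `x` in `H`: the set of edges of `H` containing `x`. -/
def starOf {n : ℕ} (H : Finset (Finset (Fin n))) (x : Fin n) : Finset (Finset (Fin n)) :=
  H.filter (fun A => x ∈ A)

/-- The degree of `x` in `H`. -/
def vdeg {n : ℕ} (H : Finset (Finset (Fin n))) (x : Fin n) : ℕ := (starOf H x).card

/-- The maximum degree of `H`. -/
def maxDegree {n : ℕ} (H : Finset (Finset (Fin n))) : ℕ :=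
  Finset.univ.sup (vdeg H)

/-- A family is nontrivial if it is not contained in a star. -/
def IsNontrivial {n : ℕ} (C : Finset (Finset (Fin n))) : Prop :=
  ¬ ∃ x : Fin n, ∀ A ∈ C, x ∈ A

/-- `H` satisfies (strong) EKR if every maximum-size intersecting subfamily of `H`
is a star of `H`. -/
def EKR {n : ℕ} (H : Finset (Finset (Fin n))) : Prop :=
  ∀ C ⊆ H, IsClique C → (∀ D ⊆ H, IsClique D → D.card ≤ C.card) →
    ∃ x : Fin n, C = starOf H x

open Classical in
/-- `q = q(n,k)`: the probability that two independent uniform `k`-subsets of `[n]` meet. -/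
def interProb (n k : ℕ) : ℝ :=
  ((((kSets n k) ×ˢ (kSets n k)).filter fun AB => (AB.1 ∩ AB.2).Nonempty).card : ℝ) /
    ((kSets n k).card : ℝ) ^ 2

/-- `φ = p·C(n-1,k-1)`, the expected degree of a vertex. -/
def phi (n k : ℕ) (p : ℝ) : ℝ := p * ((n - 1).choose (k - 1) : ℝ)

/-- `μ̄ = φ·n/k`, the expected number of edges. -/
def mubar (n k : ℕ) (p : ℝ) : ℝ := phi n k p * n / k

/-- The generalized binomial coefficient `C(x,t) = x(x-1)⋯(x-t+1)/t!`. -/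
def gchoose (x : ℝ) (t : ℕ) : ℝ := (∏ i ∈ Finset.range t, (x - i)) / (t.factorial : ℝ)

/-- `Λ(t) = C(μ̄,t)·q^{C(t,2)}`. -/
def Lam (n k : ℕ) (p : ℝ) (t : ℕ) : ℝ :=
  gchoose (mubar n k p) t * interProb n k ^ t.choose 2

/-- `Λ'(t)`: equals `0` for `t ≤ 2` and `Λ(t)` otherwise. -/
def Lam' (n k : ℕ) (p : ℝ) (t : ℕ) : ℝ := if t ≤ 2 then 0 else Lam n k p t

open Classical in
/-- The probability of `E` for a uniform sample from the finite set `s`. -/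
def uprob {α : Type*} (s : Finset α) (E : α → Prop) : ℝ :=
  ((s.filter E).card : ℝ) / (s.card : ℝ)

open Classical in
/-- The probability of `E` under the probability mass function `w` on `Ω`. -/
def wprob {Ω : Type*} [Fintype Ω] (w : Ω → ℝ) (E : Ω → Prop) : ℝ :=
  ∑ ω ∈ Finset.univ.filter E, w ω

open Classical in
/-- The probability that the family `{A_1,…,A_m}` formed by `m` independent uniform
`k`-subsets of `[n]` satisfies `P`. -/
def iidprob (n k m : ℕ) (P : Finset (Finset (Fin n)) → Prop) : ℝ :=
  uprob ((Finset.univ : Finset (Fin m → Finset (Fin n))).filter fun f => ∀ i, f i ∈ kSets n k)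
    (fun f => P (Finset.image f Finset.univ))

open Classical in
/-- The probability that the tuple `(A_1,…,A_m)` of independent uniform `k`-subsets of `[n]`
satisfies `P`. -/
def tupleProb (n k m : ℕ) (P : (Fin m → Finset (Fin n)) → Prop) : ℝ :=
  uprob ((Finset.univ : Finset (Fin m → Finset (Fin n))).filter fun f => ∀ i, f i ∈ kSets n k) P

/-- `Pr(Bin(M,p) ≥ θ)`. -/
def binomProbGe (M : ℕ) (p : ℝ) (θ : ℕ) : ℝ :=
  ∑ j ∈ Finset.Icc θ M, (M.choose j : ℝ) * p ^ j * (1 - p) ^ (M - j)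

/-- `φ* = log³ n / log(1/q)`. -/
def phiStar (n k : ℕ) : ℝ := (Real.log n) ^ 3 / Real.log (1 / interProb n k)

/-- `α₁`: the largest integer `t` with `Pr(Bin(C(n-1,k-1),p) ≥ t) ≥ ψ/n`, where `ψ = log n`. -/
def alpha1 (n k : ℕ) (p : ℝ) : ℕ :=
  sSup {t : ℕ | Real.log n / n ≤ binomProbGe ((n - 1).choose (k - 1)) p t}

/-- `α₂ = min{t : Λ(t) ≤ σ}`. -/
def alpha2 (n k : ℕ) (p σn : ℝ) : ℕ := sInf {t : ℕ | Lam n k p t ≤ σn}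

/-- `α = max{α₁, α₂}`. -/
def alphaP (n k : ℕ) (p σn : ℝ) : ℕ := max (alpha1 n k p) (alpha2 n k p σn)

/-- `γ = min{α, φ*/3}`. -/
def gammaP (n k : ℕ) (p σn : ℝ) : ℕ := min (alphaP n k p σn) ⌊phiStar n k / 3⌋₊

/-- `τ = (1-ε)·γ`. -/
def tauP (ε : ℝ) (n k : ℕ) (p σn : ℝ) : ℝ := (1 - ε) * (gammaP n k p σn : ℝ)

/-- `λ = max{√(log n)/log(1/q), 2·√(log n/log(1/q))}`. -/
def lamP (n k : ℕ) : ℝ :=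
  max (Real.sqrt (Real.log n) / Real.log (1 / interProb n k))
    (2 * Real.sqrt (Real.log n / Real.log (1 / interProb n k)))

/-- `w̄ = max{φ²k²/n, 6 log n}`. -/
def wbar (n k : ℕ) (p : ℝ) : ℝ := max (phi n k p ^ 2 * (k : ℝ) ^ 2 / n) (6 * Real.log n)

/-- `q̄ = (1 + 2k²w̄/(q n²))·q`. -/
def qbar (n k : ℕ) (p : ℝ) : ℝ :=
  (1 + 2 * (k : ℝ) ^ 2 * wbar n k p / (interProb n k * (n : ℝ) ^ 2)) * interProb n k

open Classical in
/-- The probability that the random subset of `H`, keeping each element independently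
with probability `ρ`, satisfies `P`. -/
def sprob {β : Type*} [DecidableEq β] (H : Finset β) (ρ : ℝ) (P : Finset β → Prop) : ℝ :=
  ∑ G ∈ H.powerset, if P G then ρ ^ G.card * (1 - ρ) ^ (H.card - G.card) else 0

/-- The degree of `v` in the multiset `{f 0, …, f (m-1)}` (with multiplicity). -/
def tdeg {n m : ℕ} (f : Fin m → Finset (Fin n)) (v : Fin n) : ℕ :=
  (Finset.univ.filter fun i => v ∈ f i).card

/-- An increasing (up-)event in `{0,1}^ι`. -/
def IncrEvent {ι : Type*} (A : Set (ι → Bool)) : Prop :=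
  ∀ x y : ι → Bool, y ≤ x → y ∈ A → x ∈ A

/-- The coordinate `i` affects the event `A`. -/
def Affects {ι : Type*} (i : ι) (A : Set (ι → Bool)) : Prop :=
  ∃ η ∈ A, ∃ ν, ν ∉ A ∧ ∀ j, j ≠ i → η j = ν j

/-- Negative association of a family of `{0,1}`-valued random variables, defined on the
finite probability space `Ω` with probability mass function `w`. -/
def NegAssoc {Ω ι : Type*} [Fintype Ω] (w : Ω → ℝ) (X : ι → Ω → Bool) : Prop :=
  ∀ A B : Set (ι → Bool), IncrEvent A → IncrEvent B →
    (∀ i, ¬ (Affects i A ∧ Affects i B)) →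
    wprob w (fun ω => (fun i => X i ω) ∈ A ∧ (fun i => X i ω) ∈ B) ≤
      wprob w (fun ω => (fun i => X i ω) ∈ A) * wprob w (fun ω => (fun i => X i ω) ∈ B)

/-- `X = X_1 + ⋯ + X_m` for `{0,1}`-valued random variables. -/
def bcount {Ω : Type*} {m : ℕ} (X : Fin m → Ω → Bool) (ω : Ω) : ℕ :=
  (Finset.univ.filter fun i => X i ω = true).card

end


section MyAux
namespace MyProb

variable {β : Type*} [DecidableEq β]

/-- master product lemma -/
lemma prod_master (ρ : ℝ) (f : β → ℝ) (H : Finset β) :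
    ∑ G ∈ H.powerset, (∏ e ∈ G, (ρ * f e)) * (1 - ρ) ^ (H.card - G.card)
      = ∏ e ∈ H, (1 - ρ + ρ * f e) := by
  induction H using Finset.induction_on with
  | empty => simp
  | @insert x H hx ih =>
    rw [Finset.sum_powerset_insert hx, Finset.prod_insert hx, ← ih]
    rw [Finset.card_insert_of_notMem hx]
    have h1 : ∀ G ∈ H.powerset, (∏ e ∈ G, (ρ * f e)) * (1-ρ) ^ (H.card + 1 - G.card)
        = (1-ρ) * ((∏ e ∈ G, (ρ * f e)) * (1-ρ) ^ (H.card - G.card)) := by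
      intro G hG
      have hGH : G.card ≤ H.card := Finset.card_le_card (Finset.mem_powerset.mp hG)
      have : H.card + 1 - G.card = (H.card - G.card) + 1 := by omega
      rw [this, pow_succ]; ring
    have h2 : ∀ G ∈ H.powerset, (∏ e ∈ insert x G, (ρ * f e)) * (1-ρ) ^ (H.card + 1 - (insert x G).card)
        = (ρ * f x) * ((∏ e ∈ G, (ρ * f e)) * (1-ρ) ^ (H.card - G.card)) := by
      intro G hG
      have hxG : x ∉ G := fun h => hx (Finset.mem_powerset.mp hG h)
      rw [Finset.prod_insert hxG, Finset.card_insert_of_notMem hxG]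
      have hGH : G.card ≤ H.card := Finset.card_le_card (Finset.mem_powerset.mp hG)
      have : H.card + 1 - (G.card + 1) = H.card - G.card := by omega
      rw [this]; ring
    rw [Finset.sum_congr rfl h1, Finset.sum_congr rfl h2, ← Finset.mul_sum, ← Finset.mul_sum]
    ring

lemma mass_eq_one (ρ : ℝ) (H : Finset β) :
    ∑ G ∈ H.powerset, ρ ^ G.card * (1 - ρ) ^ (H.card - G.card) = 1 := by
  have := prod_master ρ (fun _ => 1) H
  simpa using this

/-- MGF: ∑ w(G) s^{|G∩A|} = (1-ρ+ρs)^{|A|} for A ⊆ H. -/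
lemma mgf (ρ s : ℝ) {A H : Finset β} (hA : A ⊆ H) :
    ∑ G ∈ H.powerset, (ρ ^ G.card * (1 - ρ) ^ (H.card - G.card)) * s ^ (G ∩ A).card
      = (1 - ρ + ρ * s) ^ A.card := by
  classical
  have := prod_master ρ (fun e => if e ∈ A then s else 1) H
  have hL : ∀ G ∈ H.powerset, (∏ e ∈ G, (ρ * if e ∈ A then s else 1)) * (1-ρ) ^ (H.card - G.card)
      = (ρ ^ G.card * (1 - ρ) ^ (H.card - G.card)) * s ^ (G ∩ A).card := by
    intro G _
    have : (∏ e ∈ G, (ρ * if e ∈ A then s else 1)) = ρ ^ G.card * s ^ (G ∩ A).card := by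
      rw [Finset.prod_mul_distrib, Finset.prod_const]
      congr 1
      rw [Finset.prod_ite_mem, Finset.prod_const]
    rw [this]; ring
  rw [Finset.sum_congr rfl hL] at this
  rw [this]
  have : ∏ e ∈ H, (1 - ρ + ρ * if e ∈ A then s else 1)
      = ∏ e ∈ H, (if e ∈ A then (1 - ρ + ρ * s) else 1) := by
    apply Finset.prod_congr rfl
    intro e _
    by_cases he : e ∈ A <;> simp [he]
  rw [this, Finset.prod_ite_mem, Finset.prod_const, Finset.inter_eq_right.mpr hA]

end MyProb

namespace MyProb
open Classical
variable {β : Type*} [DecidableEq β]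

lemma w_nonneg {ρ : ℝ} (h0 : 0 ≤ ρ) (h1 : ρ ≤ 1) (a b : ℕ) :
    0 ≤ ρ ^ a * (1 - ρ) ^ b :=
  mul_nonneg (pow_nonneg h0 _) (pow_nonneg (by linarith) _)

lemma sprob_nonneg {ρ : ℝ} (h0 : 0 ≤ ρ) (h1 : ρ ≤ 1) (H : Finset β) (P : Finset β → Prop) :
    0 ≤ sprob H ρ P := by
  apply Finset.sum_nonneg
  intro G _
  by_cases h : P G <;> simp [sprob, h, w_nonneg h0 h1]

lemma sprob_mono {ρ : ℝ} (h0 : 0 ≤ ρ) (h1 : ρ ≤ 1) (H : Finset β) {P Q : Finset β → Prop}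
    (hPQ : ∀ G ∈ H.powerset, P G → Q G) : sprob H ρ P ≤ sprob H ρ Q := by
  apply Finset.sum_le_sum
  intro G hG
  by_cases h : P G
  · simp only [if_pos h, if_pos (hPQ G hG h)]; exact le_rfl
  · simp only [if_neg h]
    by_cases h' : Q G <;> simp [h', w_nonneg h0 h1]

lemma sprob_add_compl {ρ : ℝ} (H : Finset β) (P : Finset β → Prop) :
    sprob H ρ P + sprob H ρ (fun G => ¬ P G) = 1 := by
  unfold sprob
  rw [← Finset.sum_add_distrib]
  refine Eq.trans (Finset.sum_congr rfl ?_) (mass_eq_one ρ H)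
  intro G _
  by_cases h : P G <;> simp [h]

lemma sprob_le_one {ρ : ℝ} (h0 : 0 ≤ ρ) (h1 : ρ ≤ 1) (H : Finset β) (P : Finset β → Prop) :
    sprob H ρ P ≤ 1 := by
  have := sprob_add_compl (ρ := ρ) H P
  nlinarith [sprob_nonneg h0 h1 H (fun G => ¬ P G)]

lemma sprob_union {ρ : ℝ} (h0 : 0 ≤ ρ) (h1 : ρ ≤ 1) (H : Finset β) (P Q : Finset β → Prop) :
    sprob H ρ (fun G => P G ∨ Q G) ≤ sprob H ρ P + sprob H ρ Q := by
  unfold sprob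
  rw [← Finset.sum_add_distrib]
  apply Finset.sum_le_sum
  intro G _
  by_cases hP : P G <;> by_cases hQ : Q G <;>
    simp [hP, hQ, w_nonneg h0 h1]

lemma sprob_exists {ι : Type*} {ρ : ℝ} (h0 : 0 ≤ ρ) (h1 : ρ ≤ 1) (H : Finset β)
    (s : Finset ι) (P : ι → Finset β → Prop) :
    sprob H ρ (fun G => ∃ i ∈ s, P i G) ≤ ∑ i ∈ s, sprob H ρ (P i) := by
  induction s using Finset.induction_on with
  | empty => simp [sprob]
  | @insert j s hj ih =>
    rw [Finset.sum_insert hj]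
    have h := sprob_union h0 h1 H (P j) (fun G => ∃ i ∈ s, P i G)
    refine le_trans (le_trans (sprob_mono h0 h1 H ?_) h) (by linarith)
    intro G _ hG
    obtain ⟨i, hi, hPi⟩ := hG
    rcases Finset.mem_insert.mp hi with h' | h'
    · exact Or.inl (h' ▸ hPi)
    · exact Or.inr ⟨i, h', hPi⟩

/-- Upper tail via MGF at s = 2. -/
lemma tail_upper {ρ : ℝ} (h0 : 0 ≤ ρ) (h1 : ρ ≤ 1) {A H : Finset β} (hA : A ⊆ H) (t : ℕ) :
    sprob H ρ (fun G => t ≤ (G ∩ A).card) ≤ (1 + ρ) ^ A.card / 2 ^ t := by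
  have key : sprob H ρ (fun G => t ≤ (G ∩ A).card)
      ≤ ∑ G ∈ H.powerset, (ρ ^ G.card * (1 - ρ) ^ (H.card - G.card)) * ((2:ℝ) ^ (G ∩ A).card / 2 ^ t) := by
    apply Finset.sum_le_sum
    intro G _
    by_cases h : t ≤ (G ∩ A).card
    · simp only [if_pos h]
      have h2 : (1:ℝ) ≤ (2:ℝ) ^ (G ∩ A).card / 2 ^ t := by
        rw [le_div_iff₀ (by positivity)]
        simpa using pow_le_pow_right₀ (by norm_num : (1:ℝ) ≤ 2) h
      nlinarith [w_nonneg h0 h1 G.card (H.card - G.card)]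
    · simp only [if_neg h]
      have := w_nonneg h0 h1 G.card (H.card - G.card)
      positivity
  calc sprob H ρ (fun G => t ≤ (G ∩ A).card) ≤ _ := key
    _ = (∑ G ∈ H.powerset, (ρ ^ G.card * (1 - ρ) ^ (H.card - G.card)) * (2:ℝ) ^ (G ∩ A).card) / 2 ^ t := by
        rw [Finset.sum_div]; apply Finset.sum_congr rfl; intro G _; ring
    _ = (1 + ρ) ^ A.card / 2 ^ t := by rw [mgf ρ 2 hA]; ring_nf

/-- Lower tail via MGF at s = 1/2. -/
lemma tail_lower {ρ : ℝ} (h0 : 0 ≤ ρ) (h1 : ρ ≤ 1) {A H : Finset β} (hA : A ⊆ H) (t : ℕ) :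
    sprob H ρ (fun G => (G ∩ A).card ≤ t) ≤ 2 ^ t * (1 - ρ/2) ^ A.card := by
  have key : sprob H ρ (fun G => (G ∩ A).card ≤ t)
      ≤ ∑ G ∈ H.powerset, (ρ ^ G.card * (1 - ρ) ^ (H.card - G.card)) * ((2:ℝ) ^ t * (1/2 : ℝ) ^ (G ∩ A).card) := by
    apply Finset.sum_le_sum
    intro G _
    by_cases h : (G ∩ A).card ≤ t
    · simp only [if_pos h]
      have h2 : (1:ℝ) ≤ (2:ℝ) ^ t * (1/2 : ℝ) ^ (G ∩ A).card := by
        rw [one_div, inv_pow, ← div_eq_mul_inv, le_div_iff₀ (by positivity)]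
        simpa using pow_le_pow_right₀ (by norm_num : (1:ℝ) ≤ 2) h
      nlinarith [w_nonneg h0 h1 G.card (H.card - G.card)]
    · simp only [if_neg h]
      have := w_nonneg h0 h1 G.card (H.card - G.card)
      positivity
  calc sprob H ρ (fun G => (G ∩ A).card ≤ t) ≤ _ := key
    _ = 2 ^ t * (∑ G ∈ H.powerset, (ρ ^ G.card * (1 - ρ) ^ (H.card - G.card)) * (1/2:ℝ) ^ (G ∩ A).card) := by
        rw [Finset.mul_sum]; apply Finset.sum_congr rfl; intro G _; ring
    _ = 2 ^ t * (1 - ρ/2) ^ A.card := by rw [mgf ρ (1/2) hA]; ring_nf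

end MyProb

namespace MyProb
variable {β : Type*} [DecidableEq β]

/-- Given disjoint equal-card M B₁ ⊆ H, swapping gives equal probabilities. -/
lemma sprob_swap_eq {ρ : ℝ} {M B₁ H : Finset β}
    (hM : M ⊆ H) (hB : B₁ ⊆ H) (hdisj : Disjoint M B₁) (hcard : M.card = B₁.card) :
    sprob H ρ (fun G => (G ∩ B₁).card < (G ∩ M).card)
      = sprob H ρ (fun G => (G ∩ M).card < (G ∩ B₁).card) := by
  classical
  set u : {y // y ∈ M} ≃ {y // y ∈ B₁} := Finset.equivOfCardEq hcard with hu
  set f : β → β := fun y =>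
    if h : y ∈ M then (u ⟨y, h⟩ : β) else if h' : y ∈ B₁ then (u.symm ⟨y, h'⟩ : β) else y with hf
  have hMB : ∀ y, y ∈ M → y ∉ B₁ := fun y hy => Finset.disjoint_left.mp hdisj hy
  have hBM : ∀ y, y ∈ B₁ → y ∉ M := fun y hy => Finset.disjoint_right.mp hdisj hy
  have hfM : ∀ y (h : y ∈ M), f y = (u ⟨y, h⟩ : β) := by
    intro y h; simp only [hf, dif_pos h]
  have hfB : ∀ y (h : y ∈ B₁), f y = (u.symm ⟨y, h⟩ : β) := by
    intro y h; simp only [hf]; rw [dif_neg (hBM y h), dif_pos h]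
  have hfO : ∀ y, y ∉ M → y ∉ B₁ → f y = y := by
    intro y h h'; simp only [hf, dif_neg h, dif_neg h']
  have hmemB : ∀ y (h : y ∈ M), f y ∈ B₁ := by
    intro y h; rw [hfM y h]; exact (u ⟨y, h⟩).2
  have hmemM : ∀ y (h : y ∈ B₁), f y ∈ M := by
    intro y h; rw [hfB y h]; exact (u.symm ⟨y, h⟩).2
  have hinv : Function.Involutive f := by
    intro y
    by_cases h : y ∈ M
    · have h1 : (u ⟨y, h⟩ : β) ∈ B₁ := (u ⟨y, h⟩).2
      rw [hfM y h, hfB _ h1, Subtype.coe_eta, Equiv.symm_apply_apply]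
    · by_cases h' : y ∈ B₁
      · have h1 : (u.symm ⟨y, h'⟩ : β) ∈ M := (u.symm ⟨y, h'⟩).2
        rw [hfB y h', hfM _ h1, Subtype.coe_eta, Equiv.apply_symm_apply]
      · rw [hfO y h h', hfO y h h']
  have hinj : Function.Injective f := hinv.injective
  have hiffM : ∀ y, f y ∈ M ↔ y ∈ B₁ := by
    intro y
    constructor
    · intro hy
      by_cases h : y ∈ M
      · exact absurd hy (hBM _ (hmemB y h))
      · by_cases h' : y ∈ B₁
        · exact h'
        · rw [hfO y h h'] at hy; exact absurd hy h
    · exact fun h => hmemM y h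
  have hiffB : ∀ y, f y ∈ B₁ ↔ y ∈ M := by
    intro y
    constructor
    · intro hy
      by_cases h : y ∈ M
      · exact h
      · by_cases h' : y ∈ B₁
        · exact absurd hy (hMB _ (hmemM y h'))
        · rw [hfO y h h'] at hy; exact absurd hy h'
    · exact fun h => hmemB y h
  have hfH : ∀ y, y ∈ H → f y ∈ H := by
    intro y hy
    by_cases h : y ∈ M
    · exact hB (hmemB y h)
    · by_cases h' : y ∈ B₁
      · exact hM (hmemM y h')
      · rw [hfO y h h']; exact hy
  have himgM : ∀ G : Finset β, (G.image f) ∩ M = (G ∩ B₁).image f := by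
    intro G
    ext z
    simp only [Finset.mem_inter, Finset.mem_image]
    constructor
    · rintro ⟨⟨y, hyG, rfl⟩, hzM⟩
      exact ⟨y, ⟨hyG, (hiffM y).mp hzM⟩, rfl⟩
    · rintro ⟨y, ⟨hyG, hyB⟩, rfl⟩
      exact ⟨⟨y, hyG, rfl⟩, (hiffM y).mpr hyB⟩
  have himgB : ∀ G : Finset β, (G.image f) ∩ B₁ = (G ∩ M).image f := by
    intro G
    ext z
    simp only [Finset.mem_inter, Finset.mem_image]
    constructor
    · rintro ⟨⟨y, hyG, rfl⟩, hzB⟩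
      exact ⟨y, ⟨hyG, (hiffB y).mp hzB⟩, rfl⟩
    · rintro ⟨y, ⟨hyG, hyM⟩, rfl⟩
      exact ⟨⟨y, hyG, rfl⟩, (hiffB y).mpr hyM⟩
  unfold sprob
  refine Finset.sum_nbij' (fun G => G.image f) (fun G => G.image f) ?_ ?_ ?_ ?_ ?_
  · intro G hG
    rw [Finset.mem_powerset] at *
    intro z hz
    obtain ⟨y, hy, rfl⟩ := Finset.mem_image.mp hz
    exact hfH y (hG hy)
  · intro G hG
    rw [Finset.mem_powerset] at *
    intro z hz
    obtain ⟨y, hy, rfl⟩ := Finset.mem_image.mp hz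
    exact hfH y (hG hy)
  · intro G _
    show Finset.image f (Finset.image f G) = G
    rw [Finset.image_image]
    have hid : f ∘ f = id := funext hinv
    rw [hid, Finset.image_id]
  · intro G _
    show Finset.image f (Finset.image f G) = G
    rw [Finset.image_image]
    have hid : f ∘ f = id := funext hinv
    rw [hid, Finset.image_id]
  · intro G _
    have hc : (G.image f).card = G.card := Finset.card_image_of_injective G hinj
    have h1 : ((Finset.image f G) ∩ M).card = (G ∩ B₁).card := by
      rw [himgM]; exact Finset.card_image_of_injective _ hinj
    have h2 : ((Finset.image f G) ∩ B₁).card = (G ∩ M).card := by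
      rw [himgB]; exact Finset.card_image_of_injective _ hinj
    simp only [h1, h2, hc]
    split_ifs <;> rfl

lemma sprob_swap_le_half {ρ : ℝ} (h0 : 0 ≤ ρ) (h1 : ρ ≤ 1) {M B H : Finset β}
    (hM : M ⊆ H) (hB : B ⊆ H) (hdisj : Disjoint M B) (hcard : M.card ≤ B.card) :
    sprob H ρ (fun G => (G ∩ B).card < (G ∩ M).card) ≤ 1 / 2 := by
  classical
  obtain ⟨B₁, hB₁B, hB₁card⟩ := Finset.exists_subset_card_eq hcard
  have hB₁H : B₁ ⊆ H := hB₁B.trans hB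
  have hdisj₁ : Disjoint M B₁ := hdisj.mono_right hB₁B
  have hmono : sprob H ρ (fun G => (G ∩ B).card < (G ∩ M).card)
      ≤ sprob H ρ (fun G => (G ∩ B₁).card < (G ∩ M).card) := by
    apply sprob_mono h0 h1
    intro G _ h
    exact lt_of_le_of_lt (Finset.card_le_card (Finset.inter_subset_inter (subset_refl G) hB₁B)) h
  have heq := sprob_swap_eq (ρ := ρ) hM hB₁H hdisj₁ hB₁card.symm
  have hdis : sprob H ρ (fun G => (G ∩ B₁).card < (G ∩ M).card)
      + sprob H ρ (fun G => (G ∩ M).card < (G ∩ B₁).card) ≤ 1 := by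
    have h2 : sprob H ρ (fun G => (G ∩ M).card < (G ∩ B₁).card)
        ≤ sprob H ρ (fun G => ¬ ((G ∩ B₁).card < (G ∩ M).card)) := by
      apply sprob_mono h0 h1
      intro G _ h
      omega
    have h3 := sprob_add_compl (ρ := ρ) H (fun G => (G ∩ B₁).card < (G ∩ M).card)
    linarith
  linarith [hmono, heq, hdis]

end MyProb

namespace MyProb

lemma card_kSets (n k : ℕ) : (kSets n k).card = n.choose k := by
  simp [kSets, Finset.card_powersetCard]

lemma inner_count {n k : ℕ} (hkn : k ≤ n) {A : Finset (Fin n)} (hA : A ∈ kSets n k) :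
    ((kSets n k).filter (fun B => ¬ (A ∩ B).Nonempty)).card = (n - k).choose k := by
  classical
  have hAcard : A.card = k := (Finset.mem_powersetCard.mp hA).2
  have : (kSets n k).filter (fun B => ¬ (A ∩ B).Nonempty) = Finset.powersetCard k Aᶜ := by
    ext B
    simp only [Finset.mem_filter, kSets, Finset.mem_powersetCard, Finset.not_nonempty_iff_eq_empty]
    constructor
    · rintro ⟨⟨-, hB⟩, hAB⟩
      refine ⟨fun b hb => ?_, hB⟩
      rw [Finset.mem_compl]
      intro hbA
      have : b ∈ A ∩ B := Finset.mem_inter.mpr ⟨hbA, hb⟩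
      simp [hAB] at this
    · rintro ⟨hBsub, hB⟩
      refine ⟨⟨Finset.subset_univ B, hB⟩, ?_⟩
      rw [Finset.eq_empty_iff_forall_notMem]
      intro b hb
      rcases Finset.mem_inter.mp hb with ⟨h1, h2⟩
      exact (Finset.mem_compl.mp (hBsub h2)) h1
  rw [this, Finset.card_powersetCard, Finset.card_compl, hAcard, Fintype.card_fin]

lemma card_disj_pairs {n k : ℕ} (hkn : k ≤ n) :
    (((kSets n k) ×ˢ (kSets n k)).filter fun AB => ¬ (AB.1 ∩ AB.2).Nonempty).card
      = n.choose k * (n - k).choose k := by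
  classical
  rw [Finset.card_filter, Finset.sum_product]
  have : ∀ A ∈ kSets n k,
      (∑ B ∈ kSets n k, if ¬ (A ∩ B).Nonempty then 1 else 0) = (n-k).choose k := by
    intro A hA
    rw [← Finset.card_filter]
    exact inner_count hkn hA
  rw [Finset.sum_congr rfl this, Finset.sum_const, card_kSets, smul_eq_mul]

lemma interProb_eq {n k : ℕ} (hkn : k ≤ n) :
    interProb n k = 1 - ((n-k).choose k : ℝ) / (n.choose k : ℝ) := by
  classical
  have hpos : 0 < n.choose k := Nat.choose_pos hkn
  have hsplit := Finset.card_filter_add_card_filter_not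
    (s := (kSets n k) ×ˢ (kSets n k)) (p := fun AB => (AB.1 ∩ AB.2).Nonempty)
  rw [Finset.card_product, card_kSets] at hsplit
  have hdisj := card_disj_pairs (n := n) (k := k) hkn
  have hcard : (((kSets n k) ×ˢ (kSets n k)).filter fun AB => (AB.1 ∩ AB.2).Nonempty).card
      = n.choose k * n.choose k - n.choose k * (n-k).choose k := by omega
  rw [interProb, hcard, card_kSets]
  have hle : (n-k).choose k ≤ n.choose k := Nat.choose_le_choose k (Nat.sub_le n k)
  have h2 : n.choose k * (n-k).choose k ≤ n.choose k * n.choose k :=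
    Nat.mul_le_mul_left _ hle
  rw [Nat.cast_sub h2]
  push_cast
  field_simp

lemma descFactorial_ineq {n k : ℕ} (hk : 2*k < n) :
    ((n-k).descFactorial k : ℝ) * (n:ℝ)^k ≤ (n.descFactorial k : ℝ) * ((n:ℝ) - k)^k := by
  have hcast : ((n:ℝ) - k) = ((n - k : ℕ) : ℝ) := by
    rw [Nat.cast_sub (by omega)]
  rw [hcast, ← Nat.cast_pow, ← Nat.cast_pow, ← Nat.cast_mul, ← Nat.cast_mul, Nat.cast_le]
  rw [Nat.descFactorial_eq_prod_range, Nat.descFactorial_eq_prod_range]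
  have e1 : n ^ k = ∏ _i ∈ Finset.range k, n := by simp
  have e2 : (n - k) ^ k = ∏ _i ∈ Finset.range k, (n - k) := by simp
  rw [e1, e2, ← Finset.prod_mul_distrib, ← Finset.prod_mul_distrib]
  apply Finset.prod_le_prod'
  intro i hi
  rw [Finset.mem_range] at hi
  have ha1 : n - i = (n - k - i) + k := by omega
  have ha2 : n - k = (n - k - i) + i := by omega
  have ha3 : n = (n - k - i) + k + i := by omega
  calc (n - k - i) * n = (n-k-i) * ((n-k-i) + k + i) := by rw [← ha3]
    _ ≤ (n-k-i) * ((n-k-i) + k + i) + k * i := Nat.le_add_right _ _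
    _ = ((n-k-i) + k) * ((n-k-i) + i) := by ring
    _ = (n - i) * (n - k) := by congr 1 <;> omega

lemma interProb_bounds {n k : ℕ} (hk2 : 2 ≤ k) (hkn : 2*k < n) :
    1/(n:ℝ) ≤ interProb n k ∧ interProb n k < 1 := by
  have hkn' : k ≤ n := by omega
  have hn0 : (0:ℝ) < n := by exact_mod_cast (by omega : 0 < n)
  have hk0 : (0:ℝ) < k := by exact_mod_cast (by omega : 0 < k)
  have hknR : (k:ℝ) < n := by exact_mod_cast (by omega : k < n)
  -- descFactorial and choose
  have hdfn : (n.descFactorial k : ℝ) = (k.factorial : ℝ) * (n.choose k : ℝ) := by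
    rw [← Nat.cast_mul, Nat.descFactorial_eq_factorial_mul_choose]
  have hdfm : ((n-k).descFactorial k : ℝ) = (k.factorial : ℝ) * ((n-k).choose k : ℝ) := by
    rw [← Nat.cast_mul, Nat.descFactorial_eq_factorial_mul_choose]
  have hchpos : (0:ℝ) < (n.choose k : ℝ) := by exact_mod_cast Nat.choose_pos hkn'
  have hmpos : (0:ℝ) < ((n-k).choose k : ℝ) := by
    exact_mod_cast Nat.choose_pos (by omega : k ≤ n - k)
  have hfacpos : (0:ℝ) < (k.factorial : ℝ) := by exact_mod_cast k.factorial_pos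
  -- key: ratio ≤ n / (n + k²)
  have hmain : ((n-k).choose k : ℝ) * ((n:ℝ) + (k:ℝ)^2) ≤ (n.choose k : ℝ) * n := by
    have h1 := descFactorial_ineq (n := n) (k := k) hkn
    -- (x-κ)^k (x+κ)^k ≤ x^(2k)
    have h2 : ((n:ℝ) - k)^k * ((n:ℝ) + k)^k ≤ ((n:ℝ)^2)^k := by
      rw [← mul_pow]
      apply pow_le_pow_left₀ (by nlinarith) (by nlinarith)
    -- Bernoulli: x^k (1 + k²/x) ≤ (x+κ)^k
    have h3 : (n:ℝ)^k * (1 + (k:ℝ)^2/(n:ℝ)) ≤ ((n:ℝ) + k)^k := by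
      have hb := one_add_mul_le_pow (a := (k:ℝ)/(n:ℝ))
        (le_trans (by norm_num : (-2:ℝ) ≤ 0) (by positivity)) k
      have : ((n:ℝ) + k)^k = (n:ℝ)^k * (1 + (k:ℝ)/(n:ℝ))^k := by
        rw [← mul_pow]; congr 1; field_simp
      rw [this]
      apply mul_le_mul_of_nonneg_left _ (by positivity)
      calc 1 + (k:ℝ)^2/(n:ℝ) = 1 + (k:ℝ) * ((k:ℝ)/(n:ℝ)) := by ring
        _ ≤ (1 + (k:ℝ)/(n:ℝ))^k := hb
    -- combine: dF_m * (x + κ²) ≤ dF_n * x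
    have hxk : (0:ℝ) < (n:ℝ)^k := by positivity
    have hdf : ((n-k).descFactorial k : ℝ) * ((n:ℝ)^k * (1 + (k:ℝ)^2/(n:ℝ)))
        ≤ (n.descFactorial k : ℝ) * (n:ℝ)^k := by
      have hdfmn : (0 : ℝ) ≤ ((n:ℕ).descFactorial k : ℝ) := by positivity
      calc ((n-k).descFactorial k : ℝ) * ((n:ℝ)^k * (1 + (k:ℝ)^2/(n:ℝ)))
          ≤ ((n-k).descFactorial k : ℝ) * ((n:ℝ) + k)^k := by
            apply mul_le_mul_of_nonneg_left h3 (by positivity)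
        _ ≤ (n.descFactorial k : ℝ) * (n:ℝ)^k := by
            -- from h1 and h2
            have hplus : (0:ℝ) < ((n:ℝ) + k)^k := by positivity
            have hdd : ((n-k).descFactorial k : ℝ) * ((n:ℝ) + k)^k * (n:ℝ)^k
                ≤ (n.descFactorial k : ℝ) * (n:ℝ)^k * (n:ℝ)^k := by
              calc ((n-k).descFactorial k : ℝ) * ((n:ℝ) + k)^k * (n:ℝ)^k
                  = (((n-k).descFactorial k : ℝ) * (n:ℝ)^k) * ((n:ℝ) + k)^k := by ring
                _ ≤ ((n.descFactorial k : ℝ) * ((n:ℝ) - k)^k) * ((n:ℝ) + k)^k := by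
                    apply mul_le_mul_of_nonneg_right h1 (by positivity)
                _ = (n.descFactorial k : ℝ) * (((n:ℝ) - k)^k * ((n:ℝ) + k)^k) := by ring
                _ ≤ (n.descFactorial k : ℝ) * ((n:ℝ)^2)^k := by
                    apply mul_le_mul_of_nonneg_left h2 (by positivity)
                _ = (n.descFactorial k : ℝ) * (n:ℝ)^k * (n:ℝ)^k := by
                    rw [← pow_mul]; rw [show 2*k = k + k by ring, pow_add]; ring
            exact le_of_mul_le_mul_right hdd hxk
    rw [hdfn, hdfm] at hdf
    have hmul := mul_le_mul_of_nonneg_right hdf hn0.le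
    have hL : ((k.factorial:ℝ) * (((n:ℕ)-k).choose k:ℝ)) * ((n:ℝ)^k * (1 + (k:ℝ)^2/(n:ℝ))) * (n:ℝ)
        = ((((n:ℕ)-k).choose k:ℝ) * ((n:ℝ) + (k:ℝ)^2)) * ((k.factorial:ℝ) * (n:ℝ)^k) := by
      field_simp
    have hR : ((k.factorial:ℝ) * (n.choose k:ℝ)) * (n:ℝ)^k * (n:ℝ)
        = ((n.choose k:ℝ) * (n:ℝ)) * ((k.factorial:ℝ) * (n:ℝ)^k) := by ring
    rw [hL, hR] at hmul
    exact le_of_mul_le_mul_right hmul (by positivity)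
  have hkR2 : (2:ℝ) ≤ (k:ℝ) := by exact_mod_cast hk2
  have hnR5 : (5:ℝ) ≤ (n:ℝ) := by exact_mod_cast (by omega : 5 ≤ n)
  rw [interProb_eq hkn']
  constructor
  · have hMN : (((n:ℕ)-k).choose k : ℝ) / (n.choose k : ℝ) ≤ (n:ℝ) / ((n:ℝ) + (k:ℝ)^2) := by
      rw [div_le_div_iff₀ hchpos (by positivity)]
      linarith [hmain]
    have h2 : (n:ℝ) / ((n:ℝ) + (k:ℝ)^2) ≤ 1 - 1/(n:ℝ) := by
      rw [div_le_iff₀ (by positivity)]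
      have hexp : (1 - 1/(n:ℝ)) * ((n:ℝ) + (k:ℝ)^2)
          = (n:ℝ) + (k:ℝ)^2 - 1 - (k:ℝ)^2/(n:ℝ) := by field_simp; ring
      rw [hexp]
      have hkk : (k:ℝ)^2/(n:ℝ) ≤ (k:ℝ)^2/5 := by
        apply div_le_div_of_nonneg_left (by positivity) (by norm_num) hnR5
      nlinarith
    linarith
  · have : (0:ℝ) < (((n:ℕ)-k).choose k : ℝ) / (n.choose k : ℝ) := by positivity
    linarith


end MyProb


namespace MyProb

/-- Numeric facts valid in the asymptotic regime. -/
lemma key_facts (ε : ℝ) (hε0 : 0 < ε) (hε14 : ε < 1/4) (n kk : ℕ)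
    (hq1 : 1/(n:ℝ) ≤ interProb n kk) (hq2 : interProb n kk < 1)
    (hLn : (64:ℝ) ≤ Real.log n) :
    0 < Real.log (1 / interProb n kk) ∧
    Real.log (1 / interProb n kk) ≤ Real.log n ∧
    (Real.log n)^2 ≤ phiStar n kk ∧
    phiStar n kk / 4 ≤ (1-ε) * (phiStar n kk / 3) ∧
    0 ≤ lamP n kk ∧
    lamP n kk ≤ (1-ε) * (phiStar n kk / 3) / 8 := by
  have hLn0 : (0:ℝ) < Real.log n := by linarith
  have hn1 : (1:ℝ) < (n:ℝ) := by
    by_contra hcon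
    push_neg at hcon
    have : Real.log n ≤ 0 := Real.log_nonpos (by positivity) hcon
    linarith
  have hn0 : (0:ℝ) < (n:ℝ) := by linarith
  have hq0 : (0:ℝ) < interProb n kk := lt_of_lt_of_le (by positivity) hq1
  have hLdef : Real.log (1 / interProb n kk) = - Real.log (interProb n kk) := by
    rw [one_div, Real.log_inv]
  have hL0 : 0 < Real.log (1 / interProb n kk) := by
    rw [hLdef]
    simpa using Real.log_neg hq0 hq2
  have hLle : Real.log (1 / interProb n kk) ≤ Real.log n := by
    rw [hLdef]
    have h1 : Real.log (1/(n:ℝ)) ≤ Real.log (interProb n kk) :=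
      Real.log_le_log (by positivity) hq1
    rw [one_div, Real.log_inv] at h1
    linarith
  set L := Real.log (1 / interProb n kk) with hLdef2
  set Ln := Real.log n with hLndef
  have hfS : phiStar n kk = Ln^3 / L := rfl
  have hfS2 : Ln^2 ≤ phiStar n kk := by
    rw [hfS]
    rw [le_div_iff₀ hL0]
    nlinarith
  have hfS0 : 0 < phiStar n kk := lt_of_lt_of_le (by positivity) hfS2
  have hτ4 : phiStar n kk / 4 ≤ (1-ε) * (phiStar n kk / 3) := by nlinarith
  have hsqrtLn : Real.sqrt Ln ≤ Ln := by
    have h1 : Ln ≤ Ln^2 := by nlinarith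
    calc Real.sqrt Ln ≤ Real.sqrt (Ln^2) := Real.sqrt_le_sqrt h1
      _ = Ln := Real.sqrt_sq hLn0.le
  have ht1 : (1:ℝ) ≤ Ln / L := (one_le_div hL0).mpr hLle
  have hsqrtt : Real.sqrt (Ln / L) ≤ Ln / L := by
    have h1 : Ln/L ≤ (Ln/L)^2 := by nlinarith
    calc Real.sqrt (Ln/L) ≤ Real.sqrt ((Ln/L)^2) := Real.sqrt_le_sqrt h1
      _ = Ln/L := Real.sqrt_sq (by positivity)
  have hlam0 : 0 ≤ lamP n kk := le_trans (by positivity) (le_max_left _ _)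
  have hlamle : lamP n kk ≤ 2 * (Ln / L) := by
    apply max_le
    · have hstep : Real.sqrt Ln / L ≤ Ln / L := by gcongr
      have h2 : 0 ≤ Ln / L := div_nonneg hLn0.le hL0.le
      have : Ln / L ≤ 2 * (Ln/L) := by linarith
      linarith
    · linarith [hsqrtt]
  have hlamtau : lamP n kk ≤ (1-ε) * (phiStar n kk / 3) / 8 := by
    have h1 : 2 * (Ln / L) ≤ (Ln^3/L) / 32 := by
      have hkey : 64 * Ln ≤ Ln^3 := by nlinarith
      have e1 : 2 * (Ln / L) = (64 * Ln) / (32 * L) := by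
        field_simp
        ring
      have e2 : (Ln^3/L)/32 = Ln^3 / (32 * L) := by
        rw [div_div]
        ring_nf
      rw [e1, e2]
      gcongr
    have h2 : (Ln^3/L)/32 ≤ (1-ε) * (phiStar n kk / 3) / 8 := by
      rw [← hfS]
      linarith
    linarith [hlamle]
  exact ⟨hL0, hLle, hfS2, hτ4, hlam0, hlamtau⟩

end MyProb

/-- Explicit error function for the reduction proposition. -/
noncomputable def errf (ε : ℝ) (k : ℕ → ℕ) (n : ℕ) : ℝ :=
  (2:ℝ) ^ (phiStar n (k n) / 3) * Real.exp (-(phiStar n (k n) / 4))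
  + (2:ℝ) ^ (2 / ε) * Real.exp (-((Real.log n)^2 / 4))
  + (2:ℝ) ^ (lamP n (k n)) * Real.exp (-((1 - ε) * (phiStar n (k n) / 3) / 4))
  + (n:ℝ) * Real.exp ((1 - ε) * (phiStar n (k n) / 3) / 2) / (2:ℝ) ^ ((1 - ε) * (phiStar n (k n) / 3))

lemma errf_nonneg (ε : ℝ) (k : ℕ → ℕ) (n : ℕ) : 0 ≤ errf ε k n := by
  unfold errf
  positivity

/-- In the regime, `errf` is bounded by an explicit vanishing quantity. -/
lemma errf_le (ε : ℝ) (hε0 : 0 < ε) (hε14 : ε < 1/4) (k : ℕ → ℕ) (n : ℕ)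
    (hq1 : 1/(n:ℝ) ≤ interProb n (k n)) (hq2 : interProb n (k n) < 1)
    (hLn : (64:ℝ) ≤ Real.log n) :
    errf ε k n ≤ (3 + (2:ℝ) ^ (2/ε)) * Real.exp (-((Real.log n)^2 / 64)) := by
  obtain ⟨hL0, hLle, hfS2, hτ4, hlam0, hlamtau⟩ :=
    MyProb.key_facts ε hε0 hε14 n (k n) hq1 hq2 hLn
  set Ln := Real.log n with hLndef
  set fS := phiStar n (k n) with hfSdef
  set τv := (1-ε) * (fS / 3) with hτdef
  set lamv := lamP n (k n) with hlamdef
  have hLn0 : (0:ℝ) < Ln := by linarith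
  have hfS0 : (0:ℝ) < fS := lt_of_lt_of_le (by positivity) hfS2
  have hτ0 : (0:ℝ) < τv := lt_of_lt_of_le (by linarith) hτ4
  have hτLn : Ln^2/4 ≤ τv := le_trans (by linarith) hτ4
  have hn1 : (1:ℝ) < (n:ℝ) := by
    by_contra hcon
    push_neg at hcon
    have : Real.log n ≤ 0 := Real.log_nonpos (by positivity) hcon
    linarith
  have hlog2lt : Real.log 2 < 0.6931471808 := Real.log_two_lt_d9
  have hlog2gt : (0.6931471803:ℝ) < Real.log 2 := Real.log_two_gt_d9
  have hE : Real.exp (-(Ln^2/64)) = Real.exp (-(Ln^2/64)) := rfl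
  -- term 1
  have h1 : (2:ℝ) ^ (fS / 3) * Real.exp (-(fS / 4)) ≤ Real.exp (-(Ln^2/64)) := by
    rw [Real.rpow_def_of_pos (by norm_num : (0:ℝ) < 2), ← Real.exp_add]
    apply Real.exp_le_exp.mpr
    nlinarith [mul_le_mul_of_nonneg_right hlog2lt.le (by positivity : (0:ℝ) ≤ fS/3), hfS2,
      hLn0.le, sq_nonneg Ln]
  -- term 2
  have h2 : (2:ℝ) ^ (2/ε) * Real.exp (-(Ln^2 / 4)) ≤ (2:ℝ) ^ (2/ε) * Real.exp (-(Ln^2/64)) := by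
    apply mul_le_mul_of_nonneg_left _ (by positivity)
    apply Real.exp_le_exp.mpr
    nlinarith
  -- term 3
  have h3 : (2:ℝ) ^ lamv * Real.exp (-(τv / 4)) ≤ Real.exp (-(Ln^2/64)) := by
    rw [Real.rpow_def_of_pos (by norm_num : (0:ℝ) < 2), ← Real.exp_add]
    apply Real.exp_le_exp.mpr
    have hl2 : Real.log 2 * lamv ≤ lamv := by nlinarith
    linarith [hlamtau, hτLn]
  -- term 4
  have h4 : (n:ℝ) * Real.exp (τv / 2) / (2:ℝ) ^ τv ≤ Real.exp (-(Ln^2/64)) := by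
    have hnexp : (n:ℝ) = Real.exp Ln := (Real.exp_log (by linarith)).symm
    rw [Real.rpow_def_of_pos (by norm_num : (0:ℝ) < 2), hnexp, ← Real.exp_add, ← Real.exp_sub]
    apply Real.exp_le_exp.mpr
    nlinarith [mul_le_mul_of_nonneg_right hlog2gt.le hτ0.le, hτLn, hLn,
      mul_le_mul_of_nonneg_right hLn hLn0.le]
  calc errf ε k n ≤ Real.exp (-(Ln^2/64)) + (2:ℝ) ^ (2/ε) * Real.exp (-(Ln^2/64))
        + Real.exp (-(Ln^2/64)) + Real.exp (-(Ln^2/64)) := by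
        unfold errf
        rw [← hLndef, ← hfSdef, ← hτdef, ← hlamdef]
        exact add_le_add (add_le_add (add_le_add h1 h2) h3) h4
    _ = (3 + (2:ℝ) ^ (2/ε)) * Real.exp (-(Ln^2 / 64)) := by ring

end MyAux

set_option maxHeartbeats 1600000 in
/-- **Proposition (reduction).** Under the standing assumptions with `φ > φ*`, with
`ρ = φ*/φ`, `ξ = log(1/q)/(2 log n)`, `r₀ = ξ φ`, `γ = φ*/3`, `τ = (1-ε)γ`: if `C` is a
nontrivial clique of `H` with `|C| ≥ Δ ≥ φ/2` and `Δ_C ≤ |C| - r₀`, `x` is a vertex of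
maximum clique-degree in `C`, and `G` is the random subhypergraph of `H` retaining each
edge independently with probability `ρ`, then with probability at least `1/2 - o(1)`,
`D := C ∩ G` satisfies: (a) `|D| ≥ max{d_G(x), γ}`; (b) `|D ∖ D_x| > 2/ε`;
(c) either `Δ_D < τ` or `d_D(x) > λ`. -/
theorem reduction_to_small_phi
    (ε : ℝ) (hε0 : 0 < ε) (hε14 : ε < 1 / 4)
    (k : ℕ → ℕ) (p : ℕ → ℝ)
    (hp0 : ∀ n, 0 ≤ p n) (hp1 : ∀ n, p n ≤ 1)
    (hnk : ∀ᶠ n in atTop, 2 * k n < n)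
    (δ : ℕ → ℝ) (hδ : Tendsto δ atTop (nhds 0))
    (hklow : ∀ᶠ n : ℕ in atTop, (n : ℝ) ^ ((1 : ℝ) / 2 - δ n) < (k n : ℝ))
    (hkup : ∀ᶠ n in atTop, (k n : ℝ) < Real.sqrt ((1 / 4 - ε) * n * Real.log n))
    (σ υ : ℕ → ℝ) (hσ : Tendsto σ atTop (nhds 0)) (hυ : Tendsto υ atTop (nhds 0))
    (hLam : ∀ᶠ n in atTop,
      hprob n (k n) (p n) (fun H => σ n < Lam n (k n) (p n) (maxDegree H)) < υ n)
    (hφ : ∀ᶠ n in atTop, phiStar n (k n) < phi n (k n) (p n))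
    :
    ∃ err : ℕ → ℝ, Tendsto err atTop (nhds 0) ∧
      ∀ᶠ n in atTop, ∀ H : Finset (Finset (Fin n)), H ⊆ kSets n (k n) →
        ∀ C ⊆ H, ∀ x : Fin n,
          IsClique C → IsNontrivial C →
          maxDegree H ≤ C.card →
          phi n (k n) (p n) / 2 ≤ (maxDegree H : ℝ) →
          (maxDegree C : ℝ) ≤ (C.card : ℝ) -
            (Real.log (1 / interProb n (k n)) / (2 * Real.log n)) * phi n (k n) (p n) →
          (∀ y : Fin n, vdeg C y ≤ vdeg C x) →
          1 / 2 - err n ≤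
            sprob H (phiStar n (k n) / phi n (k n) (p n)) (fun G =>
              max ((vdeg G x : ℝ)) (phiStar n (k n) / 3) ≤ ((C ∩ G).card : ℝ) ∧
              2 / ε < (((C ∩ G) \ starOf (C ∩ G) x).card : ℝ) ∧
              ((maxDegree (C ∩ G) : ℝ) < (1 - ε) * (phiStar n (k n) / 3) ∨
                lamP n (k n) < (vdeg (C ∩ G) x : ℝ))) := by
  classical
  have hlogtop : Tendsto (fun n : ℕ => Real.log n) atTop atTop :=
    Real.tendsto_log_atTop.comp tendsto_natCast_atTop_atTop
  have hδ4 : ∀ᶠ n in atTop, δ n < 1/4 := hδ.eventually_lt_const (by norm_num)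
  have hn16 : ∀ᶠ n : ℕ in atTop, 16 ≤ n := eventually_ge_atTop 16
  have hLn64 : ∀ᶠ n : ℕ in atTop, (64:ℝ) ≤ Real.log n := hlogtop.eventually_ge_atTop 64
  have hk2 : ∀ᶠ n in atTop, 2 ≤ k n := by
    filter_upwards [hklow, hδ4, hn16] with n h1 h2 h3
    have hn1 : (1:ℝ) ≤ (n:ℝ) := by exact_mod_cast (by omega : 1 ≤ n)
    have h16 : (16:ℝ) ≤ (n:ℝ) := by exact_mod_cast h3
    have e1 : (2:ℝ) = (16:ℝ) ^ ((1:ℝ)/4) := by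
      have h164 : (16:ℝ) = (2:ℝ) ^ (4:ℕ) := by norm_num
      rw [h164, ← Real.rpow_natCast 2 4, ← Real.rpow_mul (by norm_num)]
      norm_num
    have h4 : (16:ℝ) ^ ((1:ℝ)/4) ≤ (n:ℝ) ^ ((1:ℝ)/4) :=
      Real.rpow_le_rpow (by norm_num) h16 (by norm_num)
    have h5 : (n:ℝ) ^ ((1:ℝ)/4) ≤ (n:ℝ) ^ ((1:ℝ)/2 - δ n) :=
      Real.rpow_le_rpow_of_exponent_le hn1 (by linarith)
    have h6 : (2:ℝ) < (k n : ℝ) := by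
      rw [e1]; exact lt_of_le_of_lt (h4.trans h5) h1
    exact_mod_cast h6.le
  have hreg : ∀ᶠ n in atTop, (16 ≤ n ∧ 2 ≤ k n ∧ 2 * k n < n ∧ (64:ℝ) ≤ Real.log n ∧
      1/(n:ℝ) ≤ interProb n (k n) ∧ interProb n (k n) < 1) := by
    filter_upwards [hn16, hk2, hnk, hLn64] with n h1 h2 h3 h4
    obtain ⟨hq1, hq2⟩ := MyProb.interProb_bounds h2 h3
    exact ⟨h1, h2, h3, h4, hq1, hq2⟩
  refine ⟨errf ε k, ?_, ?_⟩
  · -- Tendsto errf atTop (nhds 0)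
    have h1 : Tendsto (fun x : ℝ => x^2/64) atTop atTop :=
      (Filter.tendsto_pow_atTop two_ne_zero).atTop_div_const (by norm_num)
    have h2 : Tendsto (fun n : ℕ => (Real.log n)^2/64) atTop atTop := h1.comp hlogtop
    have h3 : Tendsto (fun n : ℕ => Real.exp (-((Real.log n)^2/64))) atTop (nhds 0) := by
      exact Real.tendsto_exp_atBot.comp (Filter.tendsto_neg_atBot_iff.mpr h2)
    have hg : Tendsto (fun n : ℕ => (3 + (2:ℝ) ^ (2/ε)) * Real.exp (-((Real.log n)^2/64)))
        atTop (nhds 0) := by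
      simpa using h3.const_mul (3 + (2:ℝ)^(2/ε))
    apply squeeze_zero' (Filter.Eventually.of_forall (errf_nonneg ε k)) _ hg
    filter_upwards [hreg] with n hn
    exact errf_le ε hε0 hε14 k n hn.2.2.2.2.1 hn.2.2.2.2.2 hn.2.2.2.1
  · -- main bound
    filter_upwards [hreg, hφ] with n hn hφn
    intro H hHk C hCH x hclq hnt hΔC hφΔ hdegC hxmax
    obtain ⟨hn16', hk2', hnk', hLn64', hq1, hq2⟩ := hn
    obtain ⟨hL0, hLle, hfS2, hτ4, hlam0, hlamtau⟩ :=
      MyProb.key_facts ε hε0 hε14 n (k n) hq1 hq2 hLn64'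
    set Ln := Real.log n with hLndef
    set L := Real.log (1 / interProb n (k n)) with hLdef
    set fS := phiStar n (k n) with hfSdef
    set φv := phi n (k n) (p n) with hφdef
    set ρv := fS / φv with hρdef
    set τv := (1 - ε) * (fS / 3) with hτdef
    set lamv := lamP n (k n) with hlamdef
    have hLn0 : (0:ℝ) < Ln := by linarith
    have hfS0 : (0:ℝ) < fS := lt_of_lt_of_le (by positivity) hfS2
    have hτ0 : (0:ℝ) < τv := lt_of_lt_of_le (by linarith) hτ4
    have hφ0 : (0:ℝ) < φv := hfS0.trans hφn
    have hρ0 : (0:ℝ) ≤ ρv := by positivity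
    have hρ1 : ρv ≤ 1 := by rw [hρdef, div_le_one hφ0]; exact hφn.le
    have hρφ : ρv * φv = fS := div_mul_cancel₀ fS hφ0.ne'
    have hfSrfl : fS = Ln^3 / L := rfl
    -- blocks
    set Cx := starOf C x with hCxdef
    set Tb := C \ Cx with hTbdef
    set Ub := starOf H x \ Cx with hUbdef
    have hCxC : Cx ⊆ C := Finset.filter_subset _ _
    have hCxH : Cx ⊆ H := hCxC.trans hCH
    have hCxHx : Cx ⊆ starOf H x := by
      intro A hA
      rw [hCxdef, starOf, Finset.mem_filter] at hA
      rw [starOf, Finset.mem_filter]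
      exact ⟨hCH hA.1, hA.2⟩
    have hHxH : starOf H x ⊆ H := Finset.filter_subset _ _
    have hTbH : Tb ⊆ H := Finset.sdiff_subset.trans hCH
    have hUbH : Ub ⊆ H := Finset.sdiff_subset.trans hHxH
    have hdisjUT : Disjoint Ub Tb := by
      rw [Finset.disjoint_left]
      intro A hA hA'
      rw [hUbdef, Finset.mem_sdiff, starOf, Finset.mem_filter] at hA
      rw [hTbdef, Finset.mem_sdiff] at hA'
      exact hA'.2 (by rw [hCxdef, starOf, Finset.mem_filter]; exact ⟨hA'.1, hA.1.2⟩)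
    have hvdegHx : vdeg H x ≤ maxDegree H := Finset.le_sup (Finset.mem_univ x)
    have hUbcard : Ub.card ≤ Tb.card := by
      have h1 : Ub.card = (starOf H x).card - Cx.card := Finset.card_sdiff_of_subset hCxHx
      have h2 : Tb.card = C.card - Cx.card := Finset.card_sdiff_of_subset hCxC
      have h3 : Cx.card ≤ (starOf H x).card := Finset.card_le_card hCxHx
      have h4 : (starOf H x).card ≤ C.card := le_trans hvdegHx hΔC
      omega
    have hamax : maxDegree C = vdeg C x :=
      le_antisymm (Finset.sup_le (fun y _ => hxmax y)) (Finset.le_sup (Finset.mem_univ x))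
    have hCxcard : Cx.card = vdeg C x := rfl
    have hTbR : (L / (2 * Ln)) * φv ≤ (Tb.card : ℝ) := by
      have h2 : Tb.card = C.card - Cx.card := Finset.card_sdiff_of_subset hCxC
      have h3 : Cx.card ≤ C.card := Finset.card_le_card hCxC
      have h5 : (Tb.card:ℝ) = (C.card:ℝ) - (Cx.card:ℝ) := by
        rw [h2, Nat.cast_sub h3]
      rw [h5, hCxcard]
      have h6 : (maxDegree C : ℝ) = (vdeg C x : ℝ) := by exact_mod_cast hamax
      linarith [hdegC, h6.symm.le, h6.le]
    have hCcard : φv / 2 ≤ (C.card:ℝ) := by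
      have h1 : ((maxDegree H : ℕ):ℝ) ≤ (C.card:ℝ) := by exact_mod_cast hΔC
      linarith [hφΔ]
    have hρC : fS / 2 ≤ ρv * (C.card:ℝ) := by
      have h1 := mul_le_mul_of_nonneg_left hCcard hρ0
      have h2 : ρv * (φv/2) = fS/2 := by rw [← hρφ]; ring
      linarith
    have hρTb : Ln^2 / 2 ≤ ρv * (Tb.card:ℝ) := by
      have h1 := mul_le_mul_of_nonneg_left hTbR hρ0
      have h2 : ρv * ((L/(2*Ln)) * φv) = Ln^2/2 := by
        rw [hρdef, hfSrfl]
        field_simp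
      linarith
    -- thresholds
    set t0 : ℕ := ⌈fS/3⌉₊ - 1 with ht0def
    set t1 : ℕ := ⌊2/ε⌋₊ with ht1def
    set t2 : ℕ := ⌊lamv⌋₊ with ht2def
    set t3 : ℕ := ⌈τv⌉₊ with ht3def
    -- event translations
    have hsplitC : ∀ G : Finset (Finset (Fin n)),
        (C ∩ G).card = (G ∩ Cx).card + (G ∩ Tb).card := by
      intro G
      have hu : G ∩ C = (G ∩ Cx) ∪ (G ∩ Tb) := by
        rw [hTbdef, ← Finset.inter_union_distrib_left, Finset.union_sdiff_of_subset hCxC]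
      rw [Finset.inter_comm C G, hu, Finset.card_union_of_disjoint
        (Finset.disjoint_sdiff.mono Finset.inter_subset_right Finset.inter_subset_right)]
    have hsplitG : ∀ G : Finset (Finset (Fin n)), G ⊆ H →
        vdeg G x = (G ∩ Cx).card + (G ∩ Ub).card := by
      intro G hG
      have h1 : starOf G x = G ∩ starOf H x := by
        ext A
        simp only [starOf, Finset.mem_filter, Finset.mem_inter]
        constructor
        · rintro ⟨hAG, hxA⟩; exact ⟨hAG, hG hAG, hxA⟩
        · rintro ⟨hAG, -, hxA⟩; exact ⟨hAG, hxA⟩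
      have hu : G ∩ starOf H x = (G ∩ Cx) ∪ (G ∩ Ub) := by
        rw [hUbdef, ← Finset.inter_union_distrib_left, Finset.union_sdiff_of_subset hCxHx]
      have h2 : vdeg G x = (starOf G x).card := rfl
      rw [h2, h1, hu, Finset.card_union_of_disjoint
        (Finset.disjoint_sdiff.mono Finset.inter_subset_right Finset.inter_subset_right)]
    have hsdiff : ∀ G : Finset (Finset (Fin n)),
        ((C ∩ G) \ starOf (C ∩ G) x) = G ∩ Tb := by
      intro G
      ext A
      simp only [hTbdef, hCxdef, Finset.mem_sdiff, Finset.mem_inter, starOf,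
        Finset.mem_filter]
      tauto
    have hstarCap : ∀ (G : Finset (Finset (Fin n))) (y : Fin n),
        vdeg (C ∩ G) y = (G ∩ starOf C y).card := by
      intro G y
      have h1 : starOf (C ∩ G) y = G ∩ starOf C y := by
        ext A
        simp only [starOf, Finset.mem_filter, Finset.mem_inter]
        tauto
      have h2 : vdeg (C ∩ G) y = (starOf (C ∩ G) y).card := rfl
      rw [h2, h1]
    have hvx : ∀ G : Finset (Finset (Fin n)), vdeg (C ∩ G) x = (G ∩ Cx).card := by
      intro G
      rw [hstarCap G x, hCxdef]
    -- good event
    set PG : Finset (Finset (Fin n)) → Prop := fun G =>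
        max ((vdeg G x : ℝ)) (fS / 3) ≤ ((C ∩ G).card : ℝ) ∧
        2 / ε < (((C ∩ G) \ starOf (C ∩ G) x).card : ℝ) ∧
        ((maxDegree (C ∩ G) : ℝ) < τv ∨ lamv < (vdeg (C ∩ G) x : ℝ)) with hPGdef
    -- core failure decomposition
    have hcore : ∀ G ∈ H.powerset, ¬ PG G →
        ((G ∩ Tb).card < (G ∩ Ub).card) ∨ ((G ∩ C).card ≤ t0) ∨ ((G ∩ Tb).card ≤ t1) ∨
        (τv ≤ (maxDegree (C ∩ G) : ℝ) ∧ ((vdeg (C ∩ G) x : ℝ)) ≤ lamv) := by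
      intro G hGmem hnP
      rw [Finset.mem_powerset] at hGmem
      by_cases hA : max ((vdeg G x : ℝ)) (fS / 3) ≤ ((C ∩ G).card : ℝ)
      · by_cases hB : 2 / ε < (((C ∩ G) \ starOf (C ∩ G) x).card : ℝ)
        · right; right; right
          have hC : ¬ ((maxDegree (C ∩ G) : ℝ) < τv ∨ lamv < (vdeg (C ∩ G) x : ℝ)) :=
            fun hC => hnP ⟨hA, hB, hC⟩
          push_neg at hC
          exact hC
        · right; right; left
          push_neg at hB
          rw [hsdiff G] at hB
          exact Nat.le_floor hB
      · push_neg at hA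
        rcases lt_max_iff.mp hA with h' | h'
        · left
          have hlt : (C ∩ G).card < vdeg G x := by exact_mod_cast h'
          rw [hsplitC G, hsplitG G hGmem] at hlt
          omega
        · right; left
          have h1 : ((C ∩ G).card : ℝ) < (⌈fS/3⌉₊ : ℝ) := lt_of_lt_of_le h' (Nat.le_ceil _)
          have h2 : (C ∩ G).card < ⌈fS/3⌉₊ := by exact_mod_cast h1
          have h3 : (C ∩ G).card ≤ t0 := by rw [ht0def]; omega
          rw [Finset.inter_comm C G] at h3
          exact h3
    -- individual bounds
    have hP0 : sprob H ρv (fun G => (G ∩ Tb).card < (G ∩ Ub).card) ≤ 1/2 :=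
      MyProb.sprob_swap_le_half hρ0 hρ1 hUbH hTbH hdisjUT hUbcard
    have lower_tail : ∀ (A : Finset (Finset (Fin n))), A ⊆ H → ∀ (t : ℕ) (c e : ℝ),
        (t:ℝ) ≤ c → e/2 ≤ ρv * (A.card:ℝ) →
        sprob H ρv (fun G => (G ∩ A).card ≤ t) ≤ (2:ℝ) ^ c * Real.exp (-(e/4)) := by
      intro A hAH t c e htc hea
      refine le_trans (MyProb.tail_lower hρ0 hρ1 hAH t) ?_
      have e1 : (2:ℝ) ^ (t:ℕ) ≤ (2:ℝ) ^ c := by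
        rw [← Real.rpow_natCast 2 t]
        exact Real.rpow_le_rpow_of_exponent_le one_le_two htc
      have e2 : (1 - ρv/2) ^ A.card ≤ Real.exp (-(e/4)) := by
        have s1 : (0:ℝ) ≤ 1 - ρv/2 := by linarith
        have s2 : 1 - ρv/2 ≤ Real.exp (-(ρv/2)) := by
          have := Real.add_one_le_exp (-(ρv/2)); linarith
        calc (1 - ρv/2) ^ A.card ≤ Real.exp (-(ρv/2)) ^ A.card := pow_le_pow_left₀ s1 s2 _
          _ = Real.exp ((A.card:ℝ) * (-(ρv/2))) := (Real.exp_nat_mul _ _).symm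
          _ ≤ Real.exp (-(e/4)) := by
              apply Real.exp_le_exp.mpr
              have h7 : (A.card:ℝ) * (-(ρv/2)) = -(ρv * A.card)/2 := by ring
              rw [h7]
              linarith
      exact mul_le_mul e1 e2 (pow_nonneg (by linarith) _) (by positivity)
    have ht0R : (t0:ℝ) ≤ fS/3 := by
      have hpos : (0:ℝ) < fS/3 := by linarith
      have hge1 : 1 ≤ ⌈fS/3⌉₊ := by
        rw [Nat.one_le_ceil_iff]; exact hpos
      have hlt : (⌈fS/3⌉₊ : ℝ) < fS/3 + 1 := Nat.ceil_lt_add_one hpos.le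
      rw [ht0def, Nat.cast_sub hge1]
      push_cast
      linarith
    have hP1 : sprob H ρv (fun G => (G ∩ C).card ≤ t0)
        ≤ (2:ℝ) ^ (fS/3) * Real.exp (-(fS/4)) :=
      lower_tail C hCH t0 (fS/3) fS ht0R hρC
    have ht1R : (t1:ℝ) ≤ 2/ε := by
      rw [ht1def]; exact Nat.floor_le (by positivity)
    have hP2 : sprob H ρv (fun G => (G ∩ Tb).card ≤ t1)
        ≤ (2:ℝ) ^ ((2:ℝ)/ε) * Real.exp (-(Ln^2/4)) :=
      lower_tail Tb hTbH t1 (2/ε) (Ln^2) ht1R hρTb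
    have hcompl := MyProb.sprob_add_compl (ρ := ρv) H PG
    have herr2 : (0:ℝ) ≤ (n:ℝ) * Real.exp (τv/2) / (2:ℝ) ^ τv := by positivity
    have herr1 : (0:ℝ) ≤ (2:ℝ) ^ lamv * Real.exp (-(τv/4)) := by positivity
    have herrf : errf ε k n = (2:ℝ) ^ (fS/3) * Real.exp (-(fS/4))
        + (2:ℝ) ^ ((2:ℝ)/ε) * Real.exp (-(Ln^2/4))
        + (2:ℝ) ^ lamv * Real.exp (-(τv/4))
        + (n:ℝ) * Real.exp (τv/2) / (2:ℝ) ^ τv := by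
      unfold errf
      rw [← hLndef, ← hfSdef, ← hτdef, ← hlamdef]
    by_cases hcase : τv/2 ≤ ρv * ((Cx.card:ℕ):ℝ)
    · -- case 1: the clique degree of x is large
      have ht2R : (t2:ℝ) ≤ lamv := by
        rw [ht2def]; exact Nat.floor_le hlam0
      have hP3 : sprob H ρv (fun G => (G ∩ Cx).card ≤ t2)
          ≤ (2:ℝ) ^ lamv * Real.exp (-(τv/4)) :=
        lower_tail Cx hCxH t2 lamv τv ht2R hcase
      have himp : sprob H ρv (fun G => ¬ PG G)
          ≤ sprob H ρv (fun G => ((G ∩ Tb).card < (G ∩ Ub).card) ∨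
              (((G ∩ C).card ≤ t0) ∨ (((G ∩ Tb).card ≤ t1) ∨ ((G ∩ Cx).card ≤ t2)))) := by
        apply MyProb.sprob_mono hρ0 hρ1
        intro G hG hnp
        rcases hcore G hG hnp with h|h|h|h
        · exact Or.inl h
        · exact Or.inr (Or.inl h)
        · exact Or.inr (Or.inr (Or.inl h))
        · refine Or.inr (Or.inr (Or.inr ?_))
          have hle : ((vdeg (C ∩ G) x : ℝ)) ≤ lamv := h.2
          have heq : ((G ∩ Cx).card : ℝ) = ((vdeg (C ∩ G) x : ℕ) : ℝ) := by
            rw [hvx G]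
          rw [ht2def]
          exact Nat.le_floor (by rw [heq]; exact hle)
      have hunion : sprob H ρv (fun G => ((G ∩ Tb).card < (G ∩ Ub).card) ∨
              (((G ∩ C).card ≤ t0) ∨ (((G ∩ Tb).card ≤ t1) ∨ ((G ∩ Cx).card ≤ t2))))
          ≤ 1/2 + ((2:ℝ) ^ (fS/3) * Real.exp (-(fS/4))
            + ((2:ℝ) ^ ((2:ℝ)/ε) * Real.exp (-(Ln^2/4))
              + (2:ℝ) ^ lamv * Real.exp (-(τv/4)))) := by
        refine le_trans (MyProb.sprob_union hρ0 hρ1 H _ _) (add_le_add hP0 ?_)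
        refine le_trans (MyProb.sprob_union hρ0 hρ1 H _ _) (add_le_add hP1 ?_)
        exact le_trans (MyProb.sprob_union hρ0 hρ1 H _ _) (add_le_add hP2 hP3)
      have hbad := le_trans himp hunion
      have hgood : 1/2 - errf ε k n ≤ sprob H ρv PG := by
        rw [herrf]
        linarith
      exact hgood
    · -- case 2: all clique degrees are small
      push_neg at hcase
      have hP4 : sprob H ρv (fun G => ∃ y ∈ (Finset.univ : Finset (Fin n)),
            t3 ≤ (G ∩ starOf C y).card)
          ≤ (n:ℝ) * Real.exp (τv/2) / (2:ℝ) ^ τv := by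
        refine le_trans (MyProb.sprob_exists hρ0 hρ1 H Finset.univ _) ?_
        have hone : ∀ y : Fin n, sprob H ρv (fun G => t3 ≤ (G ∩ starOf C y).card)
            ≤ Real.exp (τv/2) / (2:ℝ) ^ τv := by
          intro y
          have hCyH : starOf C y ⊆ H := (Finset.filter_subset _ _).trans hCH
          refine le_trans (MyProb.tail_upper hρ0 hρ1 hCyH t3) ?_
          have hnum : (1+ρv) ^ (starOf C y).card ≤ Real.exp (τv/2) := by
            have s2 : 1 + ρv ≤ Real.exp ρv := by
              have := Real.add_one_le_exp ρv; linarith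
            have s0 : (0:ℝ) ≤ 1 + ρv := by linarith
            calc (1+ρv) ^ (starOf C y).card
                ≤ Real.exp ρv ^ (starOf C y).card := pow_le_pow_left₀ s0 s2 _
              _ = Real.exp (((starOf C y).card : ℝ) * ρv) := (Real.exp_nat_mul _ _).symm
              _ ≤ Real.exp (τv/2) := by
                  apply Real.exp_le_exp.mpr
                  have hdy : (starOf C y).card ≤ Cx.card := by
                    rw [hCxdef]; exact hxmax y
                  have hdyR : ((starOf C y).card : ℝ) ≤ ((Cx.card:ℕ):ℝ) := by
                    exact_mod_cast hdy
                  have hmul := mul_le_mul_of_nonneg_right hdyR hρ0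
                  have h9 : ((Cx.card:ℕ):ℝ) * ρv < τv/2 := by
                    rw [mul_comm]; exact hcase
                  linarith
          have hden : (2:ℝ) ^ τv ≤ (2:ℝ) ^ (t3:ℕ) := by
            rw [← Real.rpow_natCast 2 t3]
            exact Real.rpow_le_rpow_of_exponent_le one_le_two
              (by rw [ht3def]; exact Nat.le_ceil τv)
          exact div_le_div₀ (by positivity) hnum (by positivity) hden
        calc ∑ y ∈ (Finset.univ : Finset (Fin n)),
              sprob H ρv (fun G => t3 ≤ (G ∩ starOf C y).card)
            ≤ ∑ _y ∈ (Finset.univ : Finset (Fin n)), Real.exp (τv/2) / (2:ℝ) ^ τv :=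
              Finset.sum_le_sum (fun y _ => hone y)
          _ = (n:ℝ) * (Real.exp (τv/2) / (2:ℝ) ^ τv) := by
              rw [Finset.sum_const, Finset.card_univ, Fintype.card_fin, nsmul_eq_mul]
          _ = (n:ℝ) * Real.exp (τv/2) / (2:ℝ) ^ τv := by ring
      have himp : sprob H ρv (fun G => ¬ PG G)
          ≤ sprob H ρv (fun G => ((G ∩ Tb).card < (G ∩ Ub).card) ∨
              (((G ∩ C).card ≤ t0) ∨ (((G ∩ Tb).card ≤ t1) ∨
                (∃ y ∈ (Finset.univ : Finset (Fin n)), t3 ≤ (G ∩ starOf C y).card)))) := by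
        apply MyProb.sprob_mono hρ0 hρ1
        intro G hG hnp
        rcases hcore G hG hnp with h|h|h|h
        · exact Or.inl h
        · exact Or.inr (Or.inl h)
        · exact Or.inr (Or.inr (Or.inl h))
        · refine Or.inr (Or.inr (Or.inr ?_))
          have h1 : τv ≤ (maxDegree (C ∩ G) : ℝ) := h.1
          have hne : (Finset.univ : Finset (Fin n)).Nonempty := ⟨x, Finset.mem_univ x⟩
          obtain ⟨y₀, -, hy₀⟩ := Finset.exists_mem_eq_sup Finset.univ hne (vdeg (C ∩ G))
          have h2 : maxDegree (C ∩ G) = vdeg (C ∩ G) y₀ := hy₀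
          rw [h2] at h1
          have h3 : t3 ≤ vdeg (C ∩ G) y₀ := by
            rw [ht3def]; exact Nat.ceil_le.mpr h1
          rw [hstarCap G y₀] at h3
          exact ⟨y₀, Finset.mem_univ y₀, h3⟩
      have hunion : sprob H ρv (fun G => ((G ∩ Tb).card < (G ∩ Ub).card) ∨
              (((G ∩ C).card ≤ t0) ∨ (((G ∩ Tb).card ≤ t1) ∨
                (∃ y ∈ (Finset.univ : Finset (Fin n)), t3 ≤ (G ∩ starOf C y).card))))
          ≤ 1/2 + ((2:ℝ) ^ (fS/3) * Real.exp (-(fS/4))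
            + ((2:ℝ) ^ ((2:ℝ)/ε) * Real.exp (-(Ln^2/4))
              + (n:ℝ) * Real.exp (τv/2) / (2:ℝ) ^ τv)) := by
        refine le_trans (MyProb.sprob_union hρ0 hρ1 H _ _) (add_le_add hP0 ?_)
        refine le_trans (MyProb.sprob_union hρ0 hρ1 H _ _) (add_le_add hP1 ?_)
        exact le_trans (MyProb.sprob_union hρ0 hρ1 H _ _) (add_le_add hP2 hP4)
      have hbad := le_trans himp hunion
      have hgood : 1/2 - errf ε k n ≤ sprob H ρv PG := by
        rw [herrf]
        linarith
      exact hgood
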